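/- arXiv:1703.04822 — 3 statements merged into one kernel-verified Lean document; each statement's English description precedes it below -/
import Mathlib

section
/- Consider linear systems x⁺ = Ax + Bu, y = Cx and z⁺ = Fz + Gv, w = Hz. Suppose M is symmetric positive definite with M ≥ CᵀC and (A+BK)ᵀM(A+BK) ≤ λ²M for some λ ∈ (0,1), and suppose P, Q satisfy PF = AP + BQ and H = CP. Define V(z,x) = √((x−Pz)ᵀM(x−Pz)) and the interface u = Rv + Qz + K(x−Pz). Then: (i) V(z,x) ≥ ‖Cx − Hz‖ for all z, x; (ii) for all v, z, x, V(Fz+Gv, Ax+Bu) ≤ λ V(z,x) + ‖√M (BR−PG) v‖. -/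
open Matrix

open scoped ComplexOrder in
/-- The positive semidefinite square root of a positive semidefinite matrix
(the definition removed from Mathlib, restored verbatim). -/
noncomputable def Matrix.PosSemidef.sqrt {n : Type*} [Fintype n] [DecidableEq n]
    {𝕜 : Type*} [RCLike 𝕜] {A : Matrix n n 𝕜} (hA : A.PosSemidef) : Matrix n n 𝕜 :=
  hA.1.eigenvectorUnitary.1 * diagonal ((↑) ∘ Real.sqrt ∘ hA.1.eigenvalues) *
  (star hA.1.eigenvectorUnitary : Matrix n n 𝕜)

private lemma psd_sqrt_mul_self {n : ℕ} {A : Matrix (Fin n) (Fin n) ℝ} (hA : A.PosSemidef) :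
    hA.sqrt * hA.sqrt = A := by
  have hU : (star hA.1.eigenvectorUnitary : Matrix (Fin n) (Fin n) ℝ) *
      hA.1.eigenvectorUnitary.1 = 1 := Unitary.coe_star_mul_self _
  have hD : diagonal ((↑) ∘ Real.sqrt ∘ hA.1.eigenvalues) *
      diagonal ((↑) ∘ Real.sqrt ∘ hA.1.eigenvalues) =
      diagonal (RCLike.ofReal ∘ hA.1.eigenvalues : Fin n → ℝ) := by
    rw [diagonal_mul_diagonal]
    congr 1; funext i
    simp [Real.mul_self_sqrt (hA.eigenvalues_nonneg i)]
  conv_rhs => rw [hA.1.spectral_theorem, Unitary.conjStarAlgAut_apply]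
  rw [Matrix.PosSemidef.sqrt]
  calc _ = hA.1.eigenvectorUnitary.1 * diagonal ((↑) ∘ Real.sqrt ∘ hA.1.eigenvalues) *
      ((star hA.1.eigenvectorUnitary : Matrix (Fin n) (Fin n) ℝ) * hA.1.eigenvectorUnitary.1) *
      diagonal ((↑) ∘ Real.sqrt ∘ hA.1.eigenvalues) *
      (star hA.1.eigenvectorUnitary : Matrix (Fin n) (Fin n) ℝ) := by simp only [mul_assoc]; rfl
    _ = _ := by rw [hU, mul_one, mul_assoc _ (diagonal _) (diagonal _), hD]

private lemma psd_sqrt_transpose {n : ℕ} {A : Matrix (Fin n) (Fin n) ℝ} (hA : A.PosSemidef) :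
    hA.sqrtᵀ = hA.sqrt := by
  rw [Matrix.PosSemidef.sqrt]
  simp [transpose_mul, mul_assoc, Matrix.star_eq_conjTranspose, conjTranspose_eq_transpose_of_trivial]

private lemma sqrt_dot_eq_norm' {n : ℕ} (a : Fin n → ℝ) :
    Real.sqrt (a ⬝ᵥ a) = ‖(WithLp.equiv 2 (Fin n → ℝ)).symm a‖ := by
  rw [EuclideanSpace.norm_eq]
  congr 1
  simp [dotProduct, sq]

private lemma sqrt_dot_triangle {n : ℕ} (a b : Fin n → ℝ) :
    Real.sqrt ((a + b) ⬝ᵥ (a + b)) ≤ Real.sqrt (a ⬝ᵥ a) + Real.sqrt (b ⬝ᵥ b) := by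
  rw [sqrt_dot_eq_norm', sqrt_dot_eq_norm', sqrt_dot_eq_norm']
  exact norm_add_le ((WithLp.equiv 2 (Fin n → ℝ)).symm a) ((WithLp.equiv 2 (Fin n → ℝ)).symm b)

private lemma quad_form_eq {n j : ℕ} (T : Matrix (Fin j) (Fin n) ℝ)
    (M : Matrix (Fin j) (Fin j) ℝ) (e : Fin n → ℝ) :
    (T *ᵥ e) ⬝ᵥ M *ᵥ (T *ᵥ e) = e ⬝ᵥ (Tᵀ * M * T) *ᵥ e := by
  rw [← mulVec_mulVec, ← mulVec_mulVec, dotProduct_mulVec e, vecMul_transpose,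
    dotProduct_mulVec]

/-- Simulation function and interface for linear systems: with
`M ≥ CᵀC`, `(A+BK)ᵀM(A+BK) ≤ λ²M`, `PF = AP + BQ`, `H = CP`, and
`V(z,x) = √((x−Pz)ᵀM(x−Pz))`, the interface `u = Rv + Qz + K(x−Pz)` gives
(i) `V(z,x) ≥ ‖Cx − Hz‖`, and
(ii) `V(Fz+Gv, Ax+Bu) ≤ λ V(z,x) + ‖√M (BR−PG) v‖`. -/
theorem stmt_9 (n p k m q : ℕ)
    (A : Matrix (Fin n) (Fin n) ℝ) (B : Matrix (Fin n) (Fin p) ℝ)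
    (C : Matrix (Fin k) (Fin n) ℝ)
    (F : Matrix (Fin m) (Fin m) ℝ) (G : Matrix (Fin m) (Fin q) ℝ)
    (H : Matrix (Fin k) (Fin m) ℝ)
    (K : Matrix (Fin p) (Fin n) ℝ) (P : Matrix (Fin n) (Fin m) ℝ)
    (Q : Matrix (Fin p) (Fin m) ℝ) (R : Matrix (Fin p) (Fin q) ℝ)
    (M : Matrix (Fin n) (Fin n) ℝ) (hM : M.PosDef) (lam : ℝ)
    (hlam0 : 0 < lam) (hlam1 : lam < 1)
    (hMC : (M - Cᵀ * C).PosSemidef)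
    (hcontr : (lam ^ 2 • M - (A + B * K)ᵀ * M * (A + B * K)).PosSemidef)
    (hPF : P * F = A * P + B * Q) (hH : H = C * P) :
    (∀ (z : Fin m → ℝ) (x : Fin n → ℝ),
      Real.sqrt ((C *ᵥ x - H *ᵥ z) ⬝ᵥ (C *ᵥ x - H *ᵥ z)) ≤
        Real.sqrt ((x - P *ᵥ z) ⬝ᵥ M *ᵥ (x - P *ᵥ z))) ∧
    (∀ (v : Fin q → ℝ) (z : Fin m → ℝ) (x : Fin n → ℝ),
      let u := R *ᵥ v + Q *ᵥ z + K *ᵥ (x - P *ᵥ z)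
      let z' := F *ᵥ z + G *ᵥ v
      let x' := A *ᵥ x + B *ᵥ u
      Real.sqrt ((x' - P *ᵥ z') ⬝ᵥ M *ᵥ (x' - P *ᵥ z')) ≤
        lam * Real.sqrt ((x - P *ᵥ z) ⬝ᵥ M *ᵥ (x - P *ᵥ z)) +
        Real.sqrt ((hM.posSemidef.sqrt *ᵥ ((B * R - P * G) *ᵥ v)) ⬝ᵥ
          (hM.posSemidef.sqrt *ᵥ ((B * R - P * G) *ᵥ v)))) := by
  set S := hM.posSemidef.sqrt with hSdef
  have hSS : S * S = M := psd_sqrt_mul_self hM.posSemidef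
  have hSsym : Sᵀ = S := by
    exact psd_sqrt_transpose hM.posSemidef
  -- quadratic form through S
  have hquad : ∀ w : Fin n → ℝ, w ⬝ᵥ M *ᵥ w = (S *ᵥ w) ⬝ᵥ (S *ᵥ w) := by
    intro w
    rw [← hSS, ← mulVec_mulVec, dotProduct_mulVec]
    nth_rewrite 1 [← hSsym]
    rw [vecMul_transpose]
  constructor
  · intro z x
    set e := x - P *ᵥ z with he
    have hCe : C *ᵥ x - H *ᵥ z = C *ᵥ e := by
      rw [he, mulVec_sub, hH, ← mulVec_mulVec]
    rw [hCe]
    apply Real.sqrt_le_sqrt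
    have h0 : 0 ≤ e ⬝ᵥ (M - Cᵀ * C) *ᵥ e := by
      have := hMC.dotProduct_mulVec_nonneg e; simpa using this
    have hCC : (C *ᵥ e) ⬝ᵥ (C *ᵥ e) = e ⬝ᵥ (Cᵀ * C) *ᵥ e := by
      rw [← mulVec_mulVec, dotProduct_mulVec e, vecMul_transpose]
    rw [sub_mulVec, dotProduct_sub] at h0
    linarith [hCC ▸ h0]
  · intro v z x u z' x'
    set e := x - P *ᵥ z with he
    have key : x' - P *ᵥ z' = (A + B * K) *ᵥ e + (B * R - P * G) *ᵥ v := by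
      show A *ᵥ x + B *ᵥ (R *ᵥ v + Q *ᵥ z + K *ᵥ e) - P *ᵥ (F *ᵥ z + G *ᵥ v) = _
      have h1 : P *ᵥ (F *ᵥ z) = A *ᵥ (P *ᵥ z) + B *ᵥ (Q *ᵥ z) := by
        rw [mulVec_mulVec, hPF, add_mulVec, mulVec_mulVec, mulVec_mulVec]
      simp only [he, mulVec_add, mulVec_sub, add_mulVec, sub_mulVec, ← mulVec_mulVec, h1]
      abel
    rw [key, hquad, mulVec_add]
    calc Real.sqrt ((S *ᵥ ((A + B * K) *ᵥ e) + S *ᵥ ((B * R - P * G) *ᵥ v)) ⬝ᵥ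
            (S *ᵥ ((A + B * K) *ᵥ e) + S *ᵥ ((B * R - P * G) *ᵥ v)))
        ≤ Real.sqrt ((S *ᵥ ((A + B * K) *ᵥ e)) ⬝ᵥ (S *ᵥ ((A + B * K) *ᵥ e))) +
          Real.sqrt ((S *ᵥ ((B * R - P * G) *ᵥ v)) ⬝ᵥ (S *ᵥ ((B * R - P * G) *ᵥ v))) :=
        sqrt_dot_triangle _ _
      _ ≤ lam * Real.sqrt (e ⬝ᵥ M *ᵥ e) +
          Real.sqrt ((S *ᵥ ((B * R - P * G) *ᵥ v)) ⬝ᵥ (S *ᵥ ((B * R - P * G) *ᵥ v))) := by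
        gcongr ?_ + _
        have h1 : (S *ᵥ ((A + B * K) *ᵥ e)) ⬝ᵥ (S *ᵥ ((A + B * K) *ᵥ e)) =
            e ⬝ᵥ ((A + B * K)ᵀ * M * (A + B * K)) *ᵥ e := by
          rw [← hquad, quad_form_eq]
        have h0 : 0 ≤ e ⬝ᵥ (lam ^ 2 • M - (A + B * K)ᵀ * M * (A + B * K)) *ᵥ e := by
          have := hcontr.dotProduct_mulVec_nonneg e; simpa using this
        rw [sub_mulVec, dotProduct_sub, smul_mulVec, dotProduct_smul] at h0
        have h2 : (S *ᵥ ((A + B * K) *ᵥ e)) ⬝ᵥ (S *ᵥ ((A + B * K) *ᵥ e)) ≤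
            lam ^ 2 * (e ⬝ᵥ M *ᵥ e) := by rw [h1]; simpa using h0
        calc Real.sqrt ((S *ᵥ ((A + B * K) *ᵥ e)) ⬝ᵥ (S *ᵥ ((A + B * K) *ᵥ e)))
            ≤ Real.sqrt (lam ^ 2 * (e ⬝ᵥ M *ᵥ e)) := Real.sqrt_le_sqrt h2
          _ = lam * Real.sqrt (e ⬝ᵥ M *ᵥ e) := by
              rw [Real.sqrt_mul (sq_nonneg lam), Real.sqrt_sq hlam0.le]
end

section
/- Let V: Z × X → ℝ≥0 satisfy, for a class K_∞ function α̂ with id − α̂ of class K, a class K function σ, a constant c ∈ (0,1], and a bound v_max ≥ 0: V(z⁺, x⁺) − V(z, x) ≤ −α̂(V(z,x)) + σ(v_max) along all transitions. Define b = α̂⁻¹(σ(v_max)/c). If V(z,x) ≤ b, then V(z⁺,x⁺) ≤ b (the sublevel set {V ≤ b} is forward invariant). -/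
/-- A class `K` function on `[0,∞)`: continuous, strictly increasing, vanishing at `0`. -/
def IsClassK (f : ℝ → ℝ) : Prop :=
  ContinuousOn f (Set.Ici 0) ∧ StrictMonoOn f (Set.Ici 0) ∧ f 0 = 0

/-- A class `K_∞` function: class `K` and unbounded. -/
def IsClassKInf (f : ℝ → ℝ) : Prop :=
  IsClassK f ∧ Filter.Tendsto f Filter.atTop Filter.atTop

/-- Forward invariance of the sublevel set `{V ≤ b}` with `b = α̂⁻¹(σ(v_max)/c)`:
if `V(z⁺,x⁺) − V(z,x) ≤ −α̂(V(z,x)) + σ(v_max)` and `V(z,x) ≤ b`, then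
`V(z⁺,x⁺) ≤ b`. -/
theorem stmt_11 {Z X : Type*} (V : Z × X → ℝ) (hVnn : ∀ pr, 0 ≤ V pr)
    (αhat σ : ℝ → ℝ) (hα : IsClassKInf αhat)
    (hid : IsClassK (fun s => s - αhat s)) (hσ : IsClassK σ)
    (c : ℝ) (hc0 : 0 < c) (hc1 : c ≤ 1) (vmax : ℝ) (hv : 0 ≤ vmax)
    (b : ℝ) (hb0 : 0 ≤ b) (hb : c * αhat b = σ vmax)
    (z : Z) (x : X) (z' : Z) (x' : X)
    (hstep : V (z', x') - V (z, x) ≤ -αhat (V (z, x)) + σ vmax)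
    (hin : V (z, x) ≤ b) :
    V (z', x') ≤ b := by
  set s := V (z, x) with hs
  have hs0 : (0:ℝ) ≤ s := hVnn _
  -- monotonicity of id - αhat
  have hmono := hid.2.1.monotoneOn
  have h1 : s - αhat s ≤ b - αhat b := hmono (Set.mem_Ici.2 hs0) (Set.mem_Ici.2 hb0) hin
  have hαb : 0 ≤ αhat b := by
    have := hα.1.2.1.monotoneOn (Set.mem_Ici.2 le_rfl) (Set.mem_Ici.2 hb0) hb0
    rwa [hα.1.2.2] at this
  have h2 : V (z', x') ≤ (s - αhat s) + σ vmax := by linarith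
  have h3 : σ vmax = c * αhat b := hb.symm
  nlinarith
end

section
/- If Σ₂ approximately simulates Σ₁ with precision ε (i.e., there exists an ε-approximate simulation relation R of Σ₁ by Σ₂ such that every initial state of Σ₁ is related to some initial state of Σ₂), then every output trajectory of Σ₁ (an infinite sequence y₁: ℕ → Y generated by some infinite run of Σ₁ from an initial state) is pointwise within distance ε of some output trajectory of Σ₂: there exists y₂ in the output behavior of Σ₂ with d(y₁(t), y₂(t)) ≤ ε for all t ∈ ℕ. -/
/-- A transition system with states `X`, inputs `U`, initial states, a transition
relation, and an output map into a metric space `Y`. -/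
structure TransSys (X U Y : Type*) where
  init : Set X
  tr : X → U → X → Prop
  out : X → Y

/-- `R` is an `ε`-approximate simulation relation of `Σ₁` by `Σ₂`. -/
def IsApproxSim {X₁ U₁ X₂ U₂ Y : Type*} [MetricSpace Y]
    (S₁ : TransSys X₁ U₁ Y) (S₂ : TransSys X₂ U₂ Y) (ε : ℝ)
    (R : Set (X₁ × X₂)) : Prop :=
  (∀ pr ∈ R, dist (S₁.out pr.1) (S₂.out pr.2) ≤ ε) ∧
  (∀ pr ∈ R, ∀ u₁ x₁', S₁.tr pr.1 u₁ x₁' →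
    ∃ u₂ x₂', S₂.tr pr.2 u₂ x₂' ∧ (x₁', x₂') ∈ R)

/-- If `Σ₂` approximately simulates `Σ₁` with precision `ε` (with the initial
state condition), then every output trajectory of `Σ₁` is pointwise within `ε`
of some output trajectory of `Σ₂`. -/
theorem stmt_18 {X₁ U₁ X₂ U₂ Y : Type*} [MetricSpace Y]
    (S₁ : TransSys X₁ U₁ Y) (S₂ : TransSys X₂ U₂ Y) (ε : ℝ)
    (R : Set (X₁ × X₂)) (hR : IsApproxSim S₁ S₂ ε R)
    (hinit : ∀ x₁ ∈ S₁.init, ∃ x₂ ∈ S₂.init, (x₁, x₂) ∈ R)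
    (x₁ : ℕ → X₁) (u₁ : ℕ → U₁) (hx₁0 : x₁ 0 ∈ S₁.init)
    (hrun₁ : ∀ t, S₁.tr (x₁ t) (u₁ t) (x₁ (t + 1))) :
    ∃ (x₂ : ℕ → X₂) (u₂ : ℕ → U₂),
      x₂ 0 ∈ S₂.init ∧
      (∀ t, S₂.tr (x₂ t) (u₂ t) (x₂ (t + 1))) ∧
      ∀ t, dist (S₁.out (x₁ t)) (S₂.out (x₂ t)) ≤ ε := by
  obtain ⟨x₂0, hx₂0, hR0⟩ := hinit _ hx₁0
  choose uf xf htr hrel using hR.2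
  let seq : ∀ t, {p : X₂ // (x₁ t, p) ∈ R} :=
    fun t => Nat.rec ⟨x₂0, hR0⟩
      (fun n p => ⟨xf (x₁ n, p.1) p.2 (u₁ n) (x₁ (n + 1)) (hrun₁ n),
        hrel (x₁ n, p.1) p.2 (u₁ n) (x₁ (n + 1)) (hrun₁ n)⟩) t
  refine ⟨fun t => (seq t).1,
    fun t => uf (x₁ t, (seq t).1) (seq t).2 (u₁ t) (x₁ (t + 1)) (hrun₁ t),
    hx₂0, fun t => ?_, fun t => hR.1 _ (seq t).2⟩
  exact htr (x₁ t, (seq t).1) (seq t).2 (u₁ t) (x₁ (t + 1)) (hrun₁ t)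
end
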